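/- Let y and z be von Mises–Fisher random vectors on S_p with parameters (κ_y, μ_y) and (κ_z, μ_z) satisfying ‖(κ_y/2)μ_y + (κ_z/2)μ_z‖₂ = 0 (equivalently κ_z = κ_y and μ_z = −μ_y). Then the squared-Hellinger distance between y and z equals d_h(y,z)² = 2·(1 − (κ_y^ν/2^ν)/(I_ν(κ_y)·Γ(ν+1))). -/

import Mathlib

open MeasureTheory Real
open scoped RealInnerProductSpace

/-- `ν = p/2 − 1`. -/
noncomputable def nuOf (p : ℕ) : ℝ := (p : ℝ) / 2 - 1

/-- The modified Bessel function of the first kind,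
`I_ν(z) = (z/2)^ν ∑_{k=0}^∞ (z/2)^{2k}/(k!·Γ(ν+k+1))`. -/
noncomputable def besselI (ν z : ℝ) : ℝ :=
  (z / 2) ^ ν * ∑' k : ℕ, (z / 2) ^ (2 * k) / (Nat.factorial k * Real.Gamma (ν + k + 1))

/-- The ratio of modified Bessel functions `r_ν(κ) = I_{ν+1}(κ)/I_ν(κ)`. -/
noncomputable def besselRatio (ν κ : ℝ) : ℝ := besselI (ν + 1) κ / besselI ν κ

/-- The standard surface measure on the unit sphere in `ℝ^p`. -/
noncomputable def sphereMeasure (p : ℕ) :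
    Measure (Metric.sphere (0 : EuclideanSpace ℝ (Fin p)) 1) :=
  (volume : Measure (EuclideanSpace ℝ (Fin p))).toSphere

/-- The von Mises–Fisher partition function `C_ν(κ) = (2π)^{ν+1} I_ν(κ)/κ^ν`. -/
noncomputable def vmfC (ν κ : ℝ) : ℝ := (2 * Real.pi) ^ (ν + 1) * besselI ν κ / κ ^ ν

/-- The von Mises–Fisher density `f_p(x;κ,μ) = exp(κ⟨μ,x⟩)/C_ν(κ)`. -/
noncomputable def vmf (p : ℕ) (κ : ℝ) (μ x : EuclideanSpace ℝ (Fin p)) : ℝ :=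
  Real.exp (κ * ⟪μ, x⟫) / vmfC (nuOf p) κ

/-- The uniform density on the unit sphere in `ℝ^p`, `u(x) = Γ(ν+1)/(2π^{ν+1})`. -/
noncomputable def uniformDensity (p : ℕ) : ℝ :=
  Real.Gamma (nuOf p + 1) / (2 * Real.pi ^ (nuOf p + 1))

/-- The squared-Hellinger distance between `f_p(·;κ_y,μ_y)` and `f_p(·;κ_z,μ_z)`. -/
noncomputable def hellingerSq (p : ℕ) (κy κz : ℝ) (μy μz : EuclideanSpace ℝ (Fin p)) : ℝ :=
  2 * (1 - ∫ x : Metric.sphere (0 : EuclideanSpace ℝ (Fin p)) 1,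
      (vmf p κy μy (x : EuclideanSpace ℝ (Fin p))
        * vmf p κz μz (x : EuclideanSpace ℝ (Fin p))) ^ ((1 : ℝ) / 2) ∂(sphereMeasure p))

lemma gamma_mono_aux {ν : ℝ} (hν : 0 ≤ ν) : ∀ k : ℕ, Real.Gamma (ν + 1) ≤ Real.Gamma (ν + k + 1) := by
  intro k
  induction k with
  | zero => simp
  | succ n ih =>
    have hn : (0:ℝ) ≤ (n:ℝ) := n.cast_nonneg
    have h1 : (1 : ℝ) ≤ ν + n + 1 := by linarith
    have h2 : Real.Gamma (ν + (n + 1 : ℕ) + 1) = (ν + n + 1) * Real.Gamma (ν + n + 1) := by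
      rw [show ν + ((n + 1 : ℕ) : ℝ) + 1 = (ν + n + 1) + 1 by push_cast; ring,
        Real.Gamma_add_one (by positivity)]
    rw [h2]
    calc Real.Gamma (ν + 1) ≤ Real.Gamma (ν + n + 1) := ih
    _ ≤ (ν + n + 1) * Real.Gamma (ν + n + 1) :=
      le_mul_of_one_le_left (le_trans (Real.Gamma_pos_of_pos (by positivity)).le ih) h1

lemma besselI_summable {ν : ℝ} (hν : 0 ≤ ν) (z : ℝ) :
    Summable (fun k : ℕ => (z / 2) ^ (2 * k) / (Nat.factorial k * Real.Gamma (ν + k + 1))) := by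
  have hΓ1 : 0 < Real.Gamma (ν + 1) := Real.Gamma_pos_of_pos (by positivity)
  have hg : Summable (fun k : ℕ => ((z / 2) ^ 2) ^ k / Nat.factorial k / Real.Gamma (ν + 1)) :=
    (Real.summable_pow_div_factorial _).div_const _
  apply hg.of_nonneg_of_le
  · intro k
    have hΓk : 0 < Real.Gamma (ν + k + 1) := Real.Gamma_pos_of_pos (by positivity)
    rw [pow_mul]
    positivity
  · intro k
    have hΓk : 0 < Real.Gamma (ν + k + 1) := Real.Gamma_pos_of_pos (by positivity)
    rw [pow_mul, div_div]
    apply div_le_div_of_nonneg_left (by positivity) (by positivity)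
    exact mul_le_mul_of_nonneg_left (gamma_mono_aux hν k) (by positivity)

lemma besselI_pos {ν z : ℝ} (hν : 0 ≤ ν) (hz : 0 < z) : 0 < besselI ν z := by
  rw [besselI]
  apply mul_pos (Real.rpow_pos_of_pos (by positivity) _)
  refine Summable.tsum_pos (besselI_summable hν z) (fun k => ?_) 0 ?_
  · have hΓk : 0 < Real.Gamma (ν + k + 1) := Real.Gamma_pos_of_pos (by positivity)
    rw [pow_mul]
    positivity
  · have hΓ0 : 0 < Real.Gamma (ν + (0:ℕ) + 1) := Real.Gamma_pos_of_pos (by positivity)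
    simp only [Nat.factorial_zero, mul_zero, pow_zero, Nat.cast_one, one_mul]
    positivity

/-- Squared-Hellinger distance between two von Mises–Fisher distributions in
the special case `κ_h = 0`. -/
theorem hellinger_sq_vmf_degenerate (p : ℕ) (hp : 2 ≤ p)
    (κy κz : ℝ) (hκy : 0 < κy) (hκz : 0 < κz)
    (μy μz : EuclideanSpace ℝ (Fin p)) (hμy : ‖μy‖ = 1) (hμz : ‖μz‖ = 1)
    (hκh : ‖(κy / 2) • μy + (κz / 2) • μz‖ = 0) :
    hellingerSq p κy κz μy μz
      = 2 * (1 - (κy ^ nuOf p / 2 ^ nuOf p)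
          / (besselI (nuOf p) κy * Real.Gamma (nuOf p + 1))) := by
  have hp0 : 0 < p := by omega
  have hp2 : (2:ℝ) ≤ (p:ℝ) := by exact_mod_cast hp
  have hν0 : 0 ≤ nuOf p := by rw [nuOf]; linarith
  have hν1 : nuOf p + 1 = (p:ℝ) / 2 := by rw [nuOf]; ring
  have hπ : 0 < Real.pi := Real.pi_pos
  -- κz = κy and κy•μy + κz•μz = 0
  have hv : (κy / 2) • μy + (κz / 2) • μz = 0 := norm_eq_zero.mp hκh
  have hzy : κz = κy := by
    have h1 : (κy / 2) • μy = -((κz / 2) • μz) := by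
      rw [eq_neg_iff_add_eq_zero]; exact hv
    have h2 : ‖(κy / 2) • μy‖ = ‖(κz / 2) • μz‖ := by rw [h1, norm_neg]
    rw [norm_smul, norm_smul, hμy, hμz, mul_one, mul_one, Real.norm_eq_abs, Real.norm_eq_abs,
      abs_of_pos (by linarith), abs_of_pos (by linarith)] at h2
    linarith
  subst hzy
  have hsum : κz • μy + κz • μz = (0 : EuclideanSpace ℝ (Fin p)) := by
    have h3 : κz • μy + κz • μz = (2:ℝ) • ((κz / 2) • μy + (κz / 2) • μz) := by module
    rw [h3, hv, smul_zero]
  -- positivity of the partition function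
  have hI : 0 < besselI (nuOf p) κz := besselI_pos hν0 hκz
  have hκν : 0 < κz ^ nuOf p := Real.rpow_pos_of_pos hκz _
  have h2π : 0 < (2 * Real.pi) ^ (nuOf p + 1) := Real.rpow_pos_of_pos (by positivity) _
  have hC : 0 < vmfC (nuOf p) κz := by rw [vmfC]; positivity
  -- the integrand is constant
  have hpt : ∀ x : Metric.sphere (0 : EuclideanSpace ℝ (Fin p)) 1,
      (vmf p κz μy (x : EuclideanSpace ℝ (Fin p))
        * vmf p κz μz (x : EuclideanSpace ℝ (Fin p))) ^ ((1:ℝ)/2)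
        = 1 / vmfC (nuOf p) κz := by
    intro x
    have hinner : κz * ⟪μy, (x : EuclideanSpace ℝ (Fin p))⟫
        + κz * ⟪μz, (x : EuclideanSpace ℝ (Fin p))⟫ = 0 := by
      have h4 : ⟪κz • μy + κz • μz, (x : EuclideanSpace ℝ (Fin p))⟫ = (0:ℝ) := by
        rw [hsum, inner_zero_left]
      rwa [inner_add_left, real_inner_smul_left, real_inner_smul_left] at h4
    have h5 : vmf p κz μy (x : EuclideanSpace ℝ (Fin p))
        * vmf p κz μz (x : EuclideanSpace ℝ (Fin p)) = (1 / vmfC (nuOf p) κz) ^ (2:ℕ) := by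
      rw [vmf, vmf, div_mul_div_comm, ← Real.exp_add, hinner, Real.exp_zero]
      ring
    rw [h5, ← Real.rpow_natCast (1 / vmfC (nuOf p) κz) 2, ← Real.rpow_mul (by positivity)]
    norm_num
  -- total mass of the sphere measure
  haveI : Nonempty (Fin p) := ⟨⟨0, hp0⟩⟩
  have hΓhalf : 0 < Real.Gamma ((p:ℝ)/2) := Real.Gamma_pos_of_pos (by positivity)
  have hmeas : (sphereMeasure p Set.univ).toReal
      = 2 * Real.pi ^ ((p:ℝ)/2) / Real.Gamma ((p:ℝ)/2) := by
    rw [sphereMeasure, Measure.toSphere_apply_univ, EuclideanSpace.volume_ball]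
    have hrank : Module.finrank ℝ (EuclideanSpace ℝ (Fin p)) = p := by
      simp [finrank_euclideanSpace]
    rw [hrank]
    simp only [Fintype.card_fin, ENNReal.ofReal_one, one_pow, one_mul]
    rw [ENNReal.toReal_mul, ENNReal.toReal_natCast, ENNReal.toReal_ofReal (by positivity)]
    have hsq : Real.sqrt Real.pi ^ p = Real.pi ^ ((p:ℝ)/2) := by
      rw [Real.sqrt_eq_rpow, ← Real.rpow_natCast (Real.pi ^ ((1:ℝ)/2)) p,
        ← Real.rpow_mul hπ.le]
      ring_nf
    have hΓp : Real.Gamma ((p:ℝ)/2 + 1) = ((p:ℝ)/2) * Real.Gamma ((p:ℝ)/2) :=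
      Real.Gamma_add_one (by positivity)
    rw [hsq, hΓp]
    have hpne : (p:ℝ) ≠ 0 := by positivity
    field_simp
  -- put it together
  rw [hellingerSq]
  rw [integral_congr_ae (Filter.Eventually.of_forall hpt), integral_const, smul_eq_mul, measureReal_def, hmeas]
  congr 1
  congr 1
  rw [vmfC]
  have hsplit : (2 * Real.pi) ^ (nuOf p + 1)
      = 2 ^ nuOf p * 2 * Real.pi ^ ((p:ℝ)/2) := by
    rw [Real.mul_rpow (by norm_num) hπ.le, hν1, ← hν1, Real.rpow_add_one (by norm_num : (2:ℝ) ≠ 0), hν1]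
  rw [hsplit, hν1]
  have hπp : (0:ℝ) < Real.pi ^ ((p:ℝ)/2) := Real.rpow_pos_of_pos hπ _
  have h2ν : (0:ℝ) < 2 ^ nuOf p := Real.rpow_pos_of_pos (by norm_num) _
  field_simp
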